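/- Let T_s be a DFS arborescence of a DAG G rooted at s, let s1 be a child of s in T_s, and let u ∈ T_{s1}. If P = (s = u_0, u_1, ..., u_{k-1} = u) is any directed path in G from s to u, and u_i is the first vertex of P belonging to T_{s1}, then all subsequent vertices u_{i+1}, ..., u_{k-1} of P also belong to T_{s1}. -/

import Mathlib

variable {V : Type*}

/-- A directed graph (given as a relation) is acyclic: no nontrivial closed directed walk. -/
def Acyclic (G : V → V → Prop) : Prop := Irreflexive (Relation.TransGen G)

/-- `l` is a directed path in `G` from `a` to `b`: consecutive vertices are joined by arcs
of `G` and no vertex is repeated. -/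
def IsDipath (G : V → V → Prop) (l : List V) (a b : V) : Prop :=
  l.Chain' G ∧ l.head? = some a ∧ l.getLast? = some b ∧ l.Nodup

/-- The internal vertices of a path (all vertices except the two endpoints). -/
def internalVerts (l : List V) : List V := l.tail.dropLast

/-- `s` is a junction of the pair of distinct vertices `u, v` in `G`: there are directed
paths from `s` to `u` and from `s` to `v` sharing no vertex other than `s`. -/
def IsJunction (G : V → V → Prop) (s u v : V) : Prop :=
  u ≠ v ∧ ∃ p q : List V, IsDipath G p s u ∧ IsDipath G q s v ∧
    ∀ x, x ∈ p → x ∈ q → x = s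

/-- `z` is the lowest common ancestor of `u` and `v` in the tree (arborescence) `T`:
a common ancestor that is a descendant of every common ancestor. -/
def IsTreeLCA (T : V → V → Prop) (u v z : V) : Prop :=
  Relation.ReflTransGen T z u ∧ Relation.ReflTransGen T z v ∧
    ∀ y, Relation.ReflTransGen T y u → Relation.ReflTransGen T y v →
      Relation.ReflTransGen T y z

/-- `s` is a lowest common ancestor of `u, v` in the DAG `G`: a junction of `u, v` such
that there is no directed path from `s` to any other junction of `u, v`. -/
def IsLCA (G : V → V → Prop) (s u v : V) : Prop :=
  IsJunction G s u v ∧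
    ∀ s', s' ≠ s → IsJunction G s' u v → ¬ Relation.TransGen G s s'

/-- A DFS arborescence of `G` rooted at `s`, spanning all descendants of `s`, together
with its post-order numbering and the standard structural properties of depth-first
search: tree arcs are graph arcs, the root has no parent, parents are unique, every
`G`-descendant of `s` is in the tree, `post` is injective on the tree, `post` strictly
decreases from a vertex to its proper tree descendants, the post-order numbers of each
subtree form a contiguous interval, and every graph arc between tree vertices is a
tree/forward arc, a back arc, or a (post-order decreasing) cross arc. -/
structure DFSArborescence (G : V → V → Prop) (s : V) where
  T : V → V → Prop
  post : V → ℕ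
  sub : ∀ ⦃a b⦄, T a b → G a b
  root_no_parent : ∀ a, ¬ T a s
  unique_parent : ∀ ⦃a b c⦄, T a b → T c b → a = c
  verts_reach : ∀ ⦃a b⦄, T a b → Relation.ReflTransGen T s a
  spans : ∀ ⦃v⦄, Relation.ReflTransGen G s v → Relation.ReflTransGen T s v
  post_inj : ∀ ⦃u v⦄, Relation.ReflTransGen T s u → Relation.ReflTransGen T s v →
      post u = post v → u = v
  post_desc : ∀ ⦃u v⦄, Relation.ReflTransGen T s u → Relation.TransGen T u v →
      post v < post u
  post_contig : ∀ ⦃u v x⦄, Relation.ReflTransGen T s u → Relation.ReflTransGen T u v →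
      Relation.ReflTransGen T s x → post v ≤ post x → post x ≤ post u →
      Relation.ReflTransGen T u x
  arc_classify : ∀ ⦃u v⦄, G u v → Relation.ReflTransGen T s u →
      Relation.ReflTransGen T s v →
      Relation.ReflTransGen T u v ∨ Relation.ReflTransGen T v u ∨ post v < post u

/-- In an arborescence (unique parents), ancestors of a vertex are comparable. -/
lemma anc_comp {T : V → V → Prop} (up : ∀ ⦃a b c⦄, T a b → T c b → a = c) :
    ∀ {a b c : V}, Relation.ReflTransGen T a c → Relation.ReflTransGen T b c →
      Relation.ReflTransGen T a b ∨ Relation.ReflTransGen T b a := by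
  intro a b c hac
  induction hac generalizing b with
  | refl => exact fun hbc => Or.inr hbc
  | @tail m c ham hmc ih =>
    intro hbc
    rcases hbc.cases_tail with heq | ⟨b', hbb', hb'c⟩
    · subst heq; exact Or.inl (ham.tail hmc)
    · have : b' = m := up hb'c hmc
      subst this
      exact ih hbb'

/-- In a DAG, a graph arc between tree vertices strictly decreases the post number. -/
lemma post_arc (G : V → V → Prop) (hG : Acyclic G) (s : V) (A : DFSArborescence G s)
    {x y : V} (hx : Relation.ReflTransGen A.T s x) (hxy : G x y)
    (hy : Relation.ReflTransGen A.T s y) : A.post y < A.post x := by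
  rcases A.arc_classify hxy hx hy with h | h | h
  · rcases Relation.reflTransGen_iff_eq_or_transGen.mp h with heq | h
    · subst heq; exact absurd (Relation.TransGen.single hxy) (hG _)
    · exact A.post_desc hx h
  · rcases Relation.reflTransGen_iff_eq_or_transGen.mp h with rfl | h
    · exact absurd (Relation.TransGen.single hxy) (hG _)
    · exact absurd ((Relation.TransGen.mono (r := A.T) (p := G) (fun _ _ hab => A.sub hab) _ _ h).tail hxy) (hG y)
  · exact h

/-- In a DAG, post numbers weakly decrease along graph reachability between tree vertices. -/
lemma post_reach (G : V → V → Prop) (hG : Acyclic G) (s : V) (A : DFSArborescence G s)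
    {x y : V} (hx : Relation.ReflTransGen A.T s x) (h : Relation.ReflTransGen G x y) :
    A.post y ≤ A.post x := by
  induction h with
  | refl => exact le_refl _
  | @tail m y hxm hmy ih =>
    have hsxG : Relation.ReflTransGen G s x :=
      Relation.ReflTransGen.mono (r := A.T) (p := G) (fun _ _ hab => A.sub hab) _ _ hx
    have hm : Relation.ReflTransGen A.T s m := A.spans (hsxG.trans hxm)
    have hyT : Relation.ReflTransGen A.T s y := A.spans ((hsxG.trans hxm).tail hmy)
    exact le_trans (le_of_lt (post_arc G hG s A hm hmy hyT)) ih

/-- One step: if `x` is in the subtree of `s1`, `G x y`, `y ≠ s`, and from `y` one can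
reach (in `G`) a vertex `u` of the subtree, then `y` is in the subtree. -/
lemma step_in_subtree (G : V → V → Prop) (hG : Acyclic G) (s : V)
    (A : DFSArborescence G s) (s1 : V) (h1 : A.T s s1) {x y u : V}
    (hx : Relation.ReflTransGen A.T s1 x) (hxy : G x y) (hyns : y ≠ s)
    (hu : Relation.ReflTransGen A.T s1 u) (hyu : Relation.ReflTransGen G y u) :
    Relation.ReflTransGen A.T s1 y := by
  have hs1 : Relation.ReflTransGen A.T s s1 := Relation.ReflTransGen.single h1
  have hsx : Relation.ReflTransGen A.T s x := hs1.trans hx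
  have hsyG : Relation.ReflTransGen G s y :=
    (Relation.ReflTransGen.mono (r := A.T) (p := G) (fun _ _ hab => A.sub hab) _ _ hsx).tail hxy
  have hsy : Relation.ReflTransGen A.T s y := A.spans hsyG
  rcases A.arc_classify hxy hsx hsy with h | h | h
  · exact hx.trans h
  · rcases anc_comp A.unique_parent h hx with hcase | hcase
    · -- y ⟶* s1
      rcases hcase.cases_tail with heq | ⟨b, hyb, hbs1⟩
      · rw [heq]
      · have : b = s := A.unique_parent hbs1 h1
        subst this
        rcases hyb.cases_tail with heq | ⟨c, _, hcs⟩
        · exact absurd heq.symm hyns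
        · exact absurd hcs (A.root_no_parent c)
    · exact hcase
  · by_cases hmem : Relation.ReflTransGen A.T s1 y
    · exact hmem
    · exfalso
      have hpx : A.post x ≤ A.post s1 := by
        rcases Relation.reflTransGen_iff_eq_or_transGen.mp hx with rfl | hx'
        · exact le_refl _
        · exact le_of_lt (A.post_desc hs1 hx')
      have hpy : A.post y < A.post s1 := lt_of_lt_of_le h hpx
      have hyu_lt : A.post y < A.post u := by
        by_contra hle
        push_neg at hle
        exact hmem (A.post_contig hs1 hu hsy hle (le_of_lt hpy))
      have := post_reach G hG s A hsy hyu
      omega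

/-- From any position in a `Chain'`, the last element is reachable. -/
lemma chain'_reach_last (G : V → V → Prop) (l : List V) (h : l.Chain' G) :
    ∀ d k (hk : k < l.length), k + d = l.length - 1 →
      Relation.ReflTransGen G (l.get ⟨k, hk⟩)
        (l.get ⟨l.length - 1, by omega⟩) := by
  intro d
  induction d with
  | zero =>
    intro k hk hkd
    have : k = l.length - 1 := by omega
    subst this
    exact Relation.ReflTransGen.refl
  | succ d ih =>
    intro k hk hkd
    have hk1 : k + 1 < l.length := by omega
    have harc : G (l.get ⟨k, hk⟩) (l.get ⟨k + 1, hk1⟩) :=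
      List.isChain_iff_getElem.mp h k (by omega)
    exact Relation.ReflTransGen.head harc (ih (k + 1) hk1 (by omega))

/-- Once a directed path from `s` to `u ∈ T_{s1}` enters the subarborescence `T_{s1}`,
all its subsequent vertices stay in `T_{s1}`. -/
theorem stmt4 (G : V → V → Prop) (hG : Acyclic G) (s : V) (A : DFSArborescence G s)
    (s1 : V) (h1 : A.T s s1) (u : V) (hu : Relation.ReflTransGen A.T s1 u)
    (p : List V) (hp : IsDipath G p s u)
    (i : ℕ) (hi : i < p.length)
    (hin : Relation.ReflTransGen A.T s1 (p.get ⟨i, hi⟩))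
    (hfirst : ∀ j (hj : j < p.length), j < i →
      ¬ Relation.ReflTransGen A.T s1 (p.get ⟨j, hj⟩)) :
    ∀ j (hj : j < p.length), i ≤ j → Relation.ReflTransGen A.T s1 (p.get ⟨j, hj⟩) := by
  obtain ⟨hchain, hhead, hlast, hnodup⟩ := hp
  have hne : p ≠ [] := by
    intro h; rw [h] at hhead; simp at hhead
  have hlen : 0 < p.length := List.length_pos_iff.mpr hne
  have hget0 : p.get ⟨0, hlen⟩ = s := by
    cases p with
    | nil => simp at hhead
    | cons a t => simpa using hhead
  have hgetlast : p.get ⟨p.length - 1, by omega⟩ = u := by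
    rw [List.getLast?_eq_getLast hne] at hlast
    have := List.getLast_eq_getElem (l := p) hne
    rw [this] at hlast
    exact Option.some_injective _ hlast
  suffices H : ∀ j, i ≤ j → ∀ hj : j < p.length, Relation.ReflTransGen A.T s1 (p.get ⟨j, hj⟩) by
    intro j hj hij; exact H j hij hj
  intro j hij
  induction j, hij using Nat.le_induction with
  | base => intro hj; exact hin
  | succ n hn ihn =>
    intro hj
    have hn' : n < p.length := by omega
    have hx := ihn hn'
    have harc : G (p.get ⟨n, hn'⟩) (p.get ⟨n + 1, hj⟩) :=
      List.isChain_iff_getElem.mp hchain n (by omega)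
    have hyns : p.get ⟨n + 1, hj⟩ ≠ s := by
      rw [← hget0]
      intro heq
      have := (hnodup.get_inj_iff).mp heq
      simp [Fin.ext_iff] at this
    have hyu : Relation.ReflTransGen G (p.get ⟨n + 1, hj⟩) u := by
      have := chain'_reach_last G p hchain (p.length - 1 - (n + 1)) (n + 1) hj (by omega)
      rwa [hgetlast] at this
    exact step_in_subtree G hG s A s1 h1 hx harc hyns hu hyu
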